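/- arXiv:1003.2226 — 4 statements merged into one kernel-verified Lean document; each statement's English description precedes it below -/
import Mathlib

section
/- For every real z ≥ 0, the modified Bessel function of the first kind of order zero satisfies I₀(z) ≤ (√π/2) · e^z/√z. (For z = 0 the right-hand side is interpreted as +∞, so the substantive claim is for z > 0.) -/
open Real MeasureTheory

/-- Modified Bessel function of the first kind of order zero,
via its integral representation `I₀(z) = (1/π) ∫₀^π exp(z cos θ) dθ`. -/
noncomputable def besselI0 (z : ℝ) : ℝ :=
  (1 / Real.pi) * ∫ θ in (0:ℝ)..Real.pi, Real.exp (z * Real.cos θ)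

lemma cos_le_one_sub (θ : ℝ) (h0 : 0 ≤ θ) (h1 : θ ≤ Real.pi) :
    Real.cos θ ≤ 1 - 2 / Real.pi ^ 2 * θ ^ 2 := by
  have hs : Real.sin (θ / 2) ^ 2 = 1 / 2 - Real.cos θ / 2 := by
    have := Real.sin_sq_eq_half_sub (θ / 2)
    rwa [mul_div_cancel₀ θ (two_ne_zero)] at this
  have hj : 2 / Real.pi * (θ / 2) ≤ Real.sin (θ / 2) :=
    Real.mul_le_sin (by linarith) (by linarith)
  have hge : θ / Real.pi ≤ Real.sin (θ / 2) := by
    have : 2 / Real.pi * (θ / 2) = θ / Real.pi := by ring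
    linarith [this ▸ hj]
  have hθπ : 0 ≤ θ / Real.pi := div_nonneg h0 Real.pi_pos.le
  have hsq : (θ / Real.pi) ^ 2 ≤ Real.sin (θ / 2) ^ 2 := by
    apply pow_le_pow_left₀ hθπ hge
  have : (θ / Real.pi) ^ 2 = θ ^ 2 / Real.pi ^ 2 := by ring
  rw [this] at hsq
  rw [hs] at hsq
  have hne : Real.pi ^ 2 ≠ 0 := by positivity
  have : 2 / Real.pi ^ 2 * θ ^ 2 = 2 * (θ ^ 2 / Real.pi ^ 2) := by ring
  linarith [this ▸ le_refl (2 / Real.pi ^ 2 * θ ^ 2)]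

lemma besselI0_bound (z : ℝ) (hz : 0 < z) :
    besselI0 z ≤ Real.sqrt Real.pi / 2 * Real.exp z / Real.sqrt z := by
  set a : ℝ := 2 * z / Real.pi ^ 2 with ha
  have hapos : 0 < a := by positivity
  -- step 1: pointwise bound of the integrand
  have hpt : ∀ θ ∈ Set.Icc (0:ℝ) Real.pi,
      Real.exp (z * Real.cos θ) ≤ Real.exp z * Real.exp (-a * θ ^ 2) := by
    intro θ hθ
    rw [← Real.exp_add]
    apply Real.exp_le_exp.2
    have := cos_le_one_sub θ hθ.1 hθ.2
    have h2 : z * Real.cos θ ≤ z * (1 - 2 / Real.pi ^ 2 * θ ^ 2) :=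
      mul_le_mul_of_nonneg_left this hz.le
    have : z * (1 - 2 / Real.pi ^ 2 * θ ^ 2) = z + -a * θ ^ 2 := by
      rw [ha]; ring
    linarith [this ▸ h2]
  have hint1 : IntervalIntegrable (fun θ => Real.exp (z * Real.cos θ)) volume 0 Real.pi :=
    (Continuous.intervalIntegrable (by continuity) _ _)
  have hint2 : IntervalIntegrable (fun θ => Real.exp z * Real.exp (-a * θ ^ 2)) volume 0 Real.pi :=
    (Continuous.intervalIntegrable (by continuity) _ _)
  have step1 : (∫ θ in (0:ℝ)..Real.pi, Real.exp (z * Real.cos θ))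
      ≤ ∫ θ in (0:ℝ)..Real.pi, Real.exp z * Real.exp (-a * θ ^ 2) :=
    intervalIntegral.integral_mono_on Real.pi_pos.le hint1 hint2 hpt
  -- step 2: bound the gaussian integral by the full half-line
  have hIoc : (∫ θ in (0:ℝ)..Real.pi, Real.exp (-a * θ ^ 2))
      = ∫ θ in Set.Ioc (0:ℝ) Real.pi, Real.exp (-a * θ ^ 2) := by
    rw [intervalIntegral.integral_of_le Real.pi_pos.le]
  have hgint : Integrable (fun θ : ℝ => Real.exp (-a * θ ^ 2)) volume :=
    integrable_exp_neg_mul_sq hapos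
  have step2 : (∫ θ in Set.Ioc (0:ℝ) Real.pi, Real.exp (-a * θ ^ 2))
      ≤ ∫ θ in Set.Ioi (0:ℝ), Real.exp (-a * θ ^ 2) := by
    apply setIntegral_mono_set hgint.integrableOn
    · filter_upwards with x using Real.exp_nonneg _
    · exact Filter.Eventually.of_forall Set.Ioc_subset_Ioi_self
  rw [integral_gaussian_Ioi a] at step2
  -- step 3: bound sqrt (π / a) / 2
  have hsa : Real.sqrt (Real.pi / a) ≤ Real.pi * Real.sqrt Real.pi / Real.sqrt z := by
    have h1 : Real.pi / a ≤ Real.pi ^ 3 / z := by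
      rw [ha, div_div_eq_mul_div, div_le_div_iff₀ (by positivity) hz]
      nlinarith [mul_pos (pow_pos Real.pi_pos 3) hz]
    calc Real.sqrt (Real.pi / a) ≤ Real.sqrt (Real.pi ^ 3 / z) := Real.sqrt_le_sqrt h1
      _ = Real.pi * Real.sqrt Real.pi / Real.sqrt z := by
          rw [show Real.pi ^ 3 = Real.pi ^ 2 * Real.pi by ring,
            Real.sqrt_div (by positivity) z, Real.sqrt_mul (by positivity),
            Real.sqrt_sq Real.pi_pos.le]
  -- combine
  have hconst : (∫ θ in (0:ℝ)..Real.pi, Real.exp z * Real.exp (-a * θ ^ 2))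
      = Real.exp z * ∫ θ in (0:ℝ)..Real.pi, Real.exp (-a * θ ^ 2) :=
    intervalIntegral.integral_const_mul _ _
  have hfin : (∫ θ in (0:ℝ)..Real.pi, Real.exp (z * Real.cos θ))
      ≤ Real.exp z * (Real.pi * Real.sqrt Real.pi / Real.sqrt z / 2) := by
    have h3 : Real.sqrt (Real.pi / a) / 2 ≤ Real.pi * Real.sqrt Real.pi / Real.sqrt z / 2 := by
      linarith
    calc (∫ θ in (0:ℝ)..Real.pi, Real.exp (z * Real.cos θ))
        ≤ Real.exp z * ∫ θ in (0:ℝ)..Real.pi, Real.exp (-a * θ ^ 2) := hconst ▸ step1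
      _ ≤ Real.exp z * (Real.pi * Real.sqrt Real.pi / Real.sqrt z / 2) := by
          apply mul_le_mul_of_nonneg_left _ (Real.exp_nonneg z)
          rw [hIoc]
          linarith
  have hπ : (0:ℝ) < Real.pi := Real.pi_pos
  have hsz : 0 < Real.sqrt z := Real.sqrt_pos.2 hz
  rw [besselI0]
  calc (1 / Real.pi) * ∫ θ in (0:ℝ)..Real.pi, Real.exp (z * Real.cos θ)
      ≤ (1 / Real.pi) * (Real.exp z * (Real.pi * Real.sqrt Real.pi / Real.sqrt z / 2)) :=
        mul_le_mul_of_nonneg_left hfin (by positivity)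
    _ = Real.sqrt Real.pi / 2 * Real.exp z / Real.sqrt z := by
        field_simp

/-- For every `z ≥ 0`, `I₀(z) ≤ (√π/2) ⬝ e^z / √z`, where for `z = 0` the right-hand
side is interpreted as `+∞` (division in `ℝ≥0∞`). -/
theorem besselI0_le_sqrt_pi_div_two_mul_exp_div_sqrt (z : ℝ) (hz : 0 ≤ z) :
    ENNReal.ofReal (besselI0 z) ≤
      ENNReal.ofReal (Real.sqrt Real.pi / 2 * Real.exp z) / ENNReal.ofReal (Real.sqrt z) := by
  rcases eq_or_lt_of_le hz with rfl | hz'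
  · rw [Real.sqrt_zero, ENNReal.ofReal_zero, ENNReal.div_zero]
    · exact le_top
    · simp [Real.exp_zero]
      positivity
  · have hsz : 0 < Real.sqrt z := Real.sqrt_pos.2 hz'
    rw [← ENNReal.ofReal_div_of_pos hsz]
    exact ENNReal.ofReal_le_ofReal (besselI0_bound z hz')
end

section
/- For all reals y > 0, P > 0, and N > 0, the pointwise density bound (1/(πN)) · exp(−(y² + P)/N) · I₀(2y√P/N) ≤ (1/(2√π N)) · exp(−(y − √P)²/N) / √(2y√P/N) holds. -/
open Real MeasureTheory

lemma besselI0_le_aux (z : ℝ) (hz : 0 < z) :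
    besselI0 z ≤ Real.exp z * Real.sqrt Real.pi / (2 * Real.sqrt z) := by
  have hπ : (0:ℝ) < Real.pi := Real.pi_pos
  set a : ℝ := 2 * z / Real.pi ^ 2 with ha_def
  have ha : 0 < a := by positivity
  -- Step 1: pointwise bound on the integrand
  have h1 : (∫ θ in (0:ℝ)..Real.pi, Real.exp (z * Real.cos θ)) ≤
      ∫ θ in (0:ℝ)..Real.pi, Real.exp z * Real.exp (-a * θ ^ 2) := by
    apply intervalIntegral.integral_mono_on hπ.le
    · exact (Continuous.intervalIntegrable (by continuity) _ _)
    · exact (Continuous.intervalIntegrable (by continuity) _ _)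
    · intro θ hθ
      rw [← Real.exp_add]
      apply Real.exp_le_exp.2
      have habs : |θ| ≤ Real.pi := by
        rw [abs_of_nonneg hθ.1]; exact hθ.2
      have hc := Real.cos_le_one_sub_mul_cos_sq habs
      have := mul_le_mul_of_nonneg_left hc hz.le
      have hπ2 : Real.pi ^ 2 > 0 := by positivity
      have heq : z * (1 - 2 / Real.pi ^ 2 * θ ^ 2) = z + -a * θ ^ 2 := by
        rw [ha_def]; field_simp; ring
      linarith
  -- Step 2: extend the Gaussian integral to the half line
  have h2 : (∫ θ in (0:ℝ)..Real.pi, Real.exp (-a * θ ^ 2)) ≤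
      ∫ θ in Set.Ioi (0:ℝ), Real.exp (-a * θ ^ 2) := by
    rw [intervalIntegral.integral_of_le hπ.le]
    apply MeasureTheory.setIntegral_mono_set
    · exact (integrable_exp_neg_mul_sq ha).integrableOn
    · filter_upwards with x using (Real.exp_pos _).le
    · filter_upwards with x hx using hx.1
  have h3 : (∫ θ in Set.Ioi (0:ℝ), Real.exp (-a * θ ^ 2)) = Real.sqrt (Real.pi / a) / 2 :=
    integral_gaussian_Ioi a
  -- compute √(π/a)
  have hpa : Real.pi / a = Real.pi ^ 2 * (Real.pi / (2 * z)) := by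
    rw [ha_def]; field_simp
  have h4 : Real.sqrt (Real.pi / a) = Real.pi * Real.sqrt (Real.pi / (2 * z)) := by
    rw [hpa, Real.sqrt_mul (by positivity), Real.sqrt_sq hπ.le]
  -- combine
  have h5 : besselI0 z ≤ (1 / Real.pi) * (Real.exp z * (Real.sqrt (Real.pi / a) / 2)) := by
    unfold besselI0
    apply mul_le_mul_of_nonneg_left _ (by positivity)
    calc (∫ θ in (0:ℝ)..Real.pi, Real.exp (z * Real.cos θ))
        ≤ ∫ θ in (0:ℝ)..Real.pi, Real.exp z * Real.exp (-a * θ ^ 2) := h1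
      _ = Real.exp z * ∫ θ in (0:ℝ)..Real.pi, Real.exp (-a * θ ^ 2) := by
          rw [← intervalIntegral.integral_const_mul]
      _ ≤ Real.exp z * (Real.sqrt (Real.pi / a) / 2) := by
          apply mul_le_mul_of_nonneg_left _ (Real.exp_pos _).le
          rw [← h3] at *
          linarith [h2]
  refine h5.trans ?_
  rw [h4]
  have h6 : Real.sqrt (Real.pi / (2 * z)) ≤ Real.sqrt Real.pi / Real.sqrt z := by
    rw [← Real.sqrt_div hπ.le]
    apply Real.sqrt_le_sqrt
    rw [div_le_div_iff₀ (by positivity) hz]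
    nlinarith
  calc (1 / Real.pi) * (Real.exp z * (Real.pi * Real.sqrt (Real.pi / (2 * z)) / 2))
      = Real.exp z * Real.sqrt (Real.pi / (2 * z)) / 2 := by
        field_simp
    _ ≤ Real.exp z * (Real.sqrt Real.pi / Real.sqrt z) / 2 := by
        have := (Real.exp_pos z).le
        gcongr
    _ = Real.exp z * Real.sqrt Real.pi / (2 * Real.sqrt z) := by ring

/-- Pointwise upper bound on the Rice output density. -/
theorem rice_density_pointwise_bound (y P N : ℝ) (hy : 0 < y) (hP : 0 < P) (hN : 0 < N) :
    (1 / (Real.pi * N)) * Real.exp (-(y ^ 2 + P) / N) * besselI0 (2 * y * Real.sqrt P / N) ≤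
      (1 / (2 * Real.sqrt Real.pi * N)) * Real.exp (-(y - Real.sqrt P) ^ 2 / N) /
        Real.sqrt (2 * y * Real.sqrt P / N) := by
  have hπ : (0:ℝ) < Real.pi := Real.pi_pos
  have hsP : 0 < Real.sqrt P := Real.sqrt_pos.2 hP
  set z : ℝ := 2 * y * Real.sqrt P / N with hz_def
  have hz : 0 < z := by positivity
  have hsq : Real.sqrt P ^ 2 = P := Real.sq_sqrt hP.le
  have hexp : Real.exp (-(y - Real.sqrt P) ^ 2 / N) =
      Real.exp (-(y ^ 2 + P) / N) * Real.exp z := by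
    rw [← Real.exp_add]
    congr 1
    rw [hz_def]
    field_simp
    nlinarith [hsq]
  rw [hexp]
  have hbound := besselI0_le_aux z hz
  have hE : 0 < Real.exp (-(y ^ 2 + P) / N) := Real.exp_pos _
  have hsz : 0 < Real.sqrt z := Real.sqrt_pos.2 hz
  have hsπ : 0 < Real.sqrt Real.pi := Real.sqrt_pos.2 hπ
  have key : (1 / (Real.pi * N)) * Real.exp (-(y ^ 2 + P) / N) *
      (Real.exp z * Real.sqrt Real.pi / (2 * Real.sqrt z)) =
      (1 / (2 * Real.sqrt Real.pi * N)) *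
        (Real.exp (-(y ^ 2 + P) / N) * Real.exp z) / Real.sqrt z := by
    have hππ : Real.sqrt Real.pi * Real.sqrt Real.pi = Real.pi :=
      Real.mul_self_sqrt hπ.le
    set s : ℝ := Real.sqrt Real.pi with hs
    rw [← hππ]
    field_simp
  calc (1 / (Real.pi * N)) * Real.exp (-(y ^ 2 + P) / N) * besselI0 z
      ≤ (1 / (Real.pi * N)) * Real.exp (-(y ^ 2 + P) / N) *
        (Real.exp z * Real.sqrt Real.pi / (2 * Real.sqrt z)) := by
        apply mul_le_mul_of_nonneg_left hbound (by positivity)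
    _ = (1 / (2 * Real.sqrt Real.pi * N)) *
        (Real.exp (-(y ^ 2 + P) / N) * Real.exp z) / Real.sqrt z := key
end

section
/- Fix reals P > 0 and N > 0. Let Φ be uniformly distributed on [0, 2π), and let Z₁, Z₂ be centered real Gaussian random variables of variance N/2, with Φ, Z₁, Z₂ mutually independent. Then the distribution of the complex random variable Y = √P·cos Φ + Z₁ + i(√P·sin Φ + Z₂) is absolutely continuous with respect to Lebesgue measure on ℂ with density p(y) = (1/(πN)) · exp(−(|y|² + P)/N) · I₀(2|y|√P/N). -/
open Real MeasureTheory ProbabilityTheory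
open scoped ENNReal NNReal

section Aux

lemma periodic_exp_cos (R : ℝ) :
    Function.Periodic (fun u => Real.exp (R * Real.cos u)) (2*Real.pi) := by
  intro x; simp [Real.cos_add_two_pi]

lemma int_two_pi (R : ℝ) :
    ∫ φ in (0:ℝ)..(2*Real.pi), Real.exp (R * Real.cos φ)
      = 2 * ∫ θ in (0:ℝ)..Real.pi, Real.exp (R * Real.cos θ) := by
  have hcont : Continuous (fun u => Real.exp (R * Real.cos u)) := by continuity
  have h1 : ∫ φ in (0:ℝ)..(2*Real.pi), Real.exp (R * Real.cos φ)
      = ∫ φ in (-Real.pi)..(Real.pi), Real.exp (R * Real.cos φ) := by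
    have := (periodic_exp_cos R).intervalIntegral_add_eq (0:ℝ) (-Real.pi)
    rw [zero_add] at this
    rw [this]; ring_nf
  rw [h1, ← intervalIntegral.integral_add_adjacent_intervals
      (a := -Real.pi) (b := 0) (c := Real.pi)
      (hcont.intervalIntegrable _ _) (hcont.intervalIntegrable _ _)]
  have h2 : ∫ φ in (-Real.pi)..(0:ℝ), Real.exp (R * Real.cos φ)
      = ∫ φ in (0:ℝ)..Real.pi, Real.exp (R * Real.cos φ) := by
    have := intervalIntegral.integral_comp_neg (a := (0:ℝ)) (b := Real.pi)
      (fun x => Real.exp (R * Real.cos x))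
    simp only [Real.cos_neg, neg_zero] at this
    rw [← this]
  rw [h2]; ring

lemma trig_main (A B : ℝ) :
    ∫ φ in (0:ℝ)..(2*Real.pi), Real.exp (A * Real.cos φ + B * Real.sin φ)
      = 2 * Real.pi * besselI0 (Real.sqrt (A^2 + B^2)) := by
  have hpi := Real.pi_pos
  set R := Real.sqrt (A^2 + B^2) with hR
  have key : ∫ φ in (0:ℝ)..(2*Real.pi), Real.exp (A * Real.cos φ + B * Real.sin φ)
      = 2 * ∫ θ in (0:ℝ)..Real.pi, Real.exp (R * Real.cos θ) := by
    by_cases h0 : A = 0 ∧ B = 0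
    · obtain ⟨hA, hB⟩ := h0
      simp [hA, hB, hR]
    · have hc : (Complex.I * B + A : ℂ) ≠ 0 := by
        intro h
        apply h0
        constructor
        · have := congrArg Complex.re h; simpa using this
        · have := congrArg Complex.im h; simpa using this
      set c : ℂ := Complex.I * B + A with hcdef
      have habs : ‖c‖ = R := by
        rw [hR, Complex.norm_def, Complex.normSq_apply]
        simp [hcdef]
        ring_nf
      set ψ := Complex.arg c with hψ
      have hcos : Real.cos ψ = A / R := by
        rw [hψ, Complex.cos_arg hc, habs]; simp [hcdef]
      have hsin : Real.sin ψ = B / R := by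
        rw [hψ, Complex.sin_arg, habs]; simp [hcdef]
      have hRpos : 0 < R := by
        rcases not_and_or.mp h0 with h | h
        · exact Real.sqrt_pos.mpr (by positivity)
        · exact Real.sqrt_pos.mpr (by positivity)
      have hA : A = R * Real.cos ψ := by rw [hcos, mul_div_assoc', eq_div_iff hRpos.ne', mul_comm]
      have hB : B = R * Real.sin ψ := by rw [hsin, mul_div_assoc', eq_div_iff hRpos.ne', mul_comm]
      have heq : ∀ φ : ℝ, A * Real.cos φ + B * Real.sin φ = R * Real.cos (φ - ψ) := by
        intro φ
        rw [Real.cos_sub, hA, hB]; ring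
      calc ∫ φ in (0:ℝ)..(2*Real.pi), Real.exp (A * Real.cos φ + B * Real.sin φ)
          = ∫ φ in (0:ℝ)..(2*Real.pi), Real.exp (R * Real.cos (φ - ψ)) := by
            apply intervalIntegral.integral_congr
            intro φ _; simp only [heq]
        _ = ∫ φ in (0-ψ:ℝ)..(2*Real.pi - ψ), Real.exp (R * Real.cos φ) := by
            exact intervalIntegral.integral_comp_sub_right (fun x => Real.exp (R * Real.cos x)) ψ
        _ = ∫ φ in (0:ℝ)..(2*Real.pi), Real.exp (R * Real.cos φ) := by
            have := (periodic_exp_cos R).intervalIntegral_add_eq (0-ψ) 0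
            rw [zero_sub, zero_add] at this
            rw [show (0:ℝ)-ψ = -ψ by ring, show 2*Real.pi - ψ = -ψ + 2*Real.pi by ring, this]
        _ = 2 * ∫ θ in (0:ℝ)..Real.pi, Real.exp (R * Real.cos θ) := int_two_pi R
  rw [key, besselI0]
  field_simp

lemma core_real (P N : ℝ) (hP : 0 < P) (hN : 0 < N) (a b : ℝ) :
    (2*Real.pi)⁻¹ * ∫ φ in (0:ℝ)..(2*Real.pi),
        (Real.sqrt (Real.pi*N))⁻¹ * Real.exp (-(a - Real.sqrt P * Real.cos φ)^2/N) *
        ((Real.sqrt (Real.pi*N))⁻¹ * Real.exp (-(b - Real.sqrt P * Real.sin φ)^2/N))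
      = (1/(Real.pi*N)) * Real.exp (-(Real.sqrt (a^2+b^2)^2 + P)/N) *
        besselI0 (2 * Real.sqrt (a^2+b^2) * Real.sqrt P / N) := by
  have hpi := Real.pi_pos
  have hPN : 0 < Real.pi * N := by positivity
  have hsq : (Real.sqrt (Real.pi*N))⁻¹ * (Real.sqrt (Real.pi*N))⁻¹ = (Real.pi*N)⁻¹ := by
    rw [← mul_inv, Real.mul_self_sqrt hPN.le]
  have hp : Real.sqrt P ^ 2 = P := Real.sq_sqrt hP.le
  set A := 2 * Real.sqrt P * a / N with hA
  set B := 2 * Real.sqrt P * b / N with hB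
  have hexpo : ∀ φ : ℝ, -(a - Real.sqrt P * Real.cos φ)^2/N + -(b - Real.sqrt P * Real.sin φ)^2/N
      = -((a^2+b^2) + P)/N + (A * Real.cos φ + B * Real.sin φ) := by
    intro φ
    have hs := Real.sin_sq_add_cos_sq φ
    rw [hA, hB]
    linear_combination (-(Real.sin φ^2 + Real.cos φ^2) * hp - P * hs)/N
  have hexp : ∀ φ : ℝ,
      (Real.sqrt (Real.pi*N))⁻¹ * Real.exp (-(a - Real.sqrt P * Real.cos φ)^2/N) *
        ((Real.sqrt (Real.pi*N))⁻¹ * Real.exp (-(b - Real.sqrt P * Real.sin φ)^2/N))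
      = ((Real.pi*N)⁻¹ * Real.exp (-((a^2+b^2) + P)/N)) *
          Real.exp (A * Real.cos φ + B * Real.sin φ) := by
    intro φ
    calc (Real.sqrt (Real.pi*N))⁻¹ * Real.exp (-(a - Real.sqrt P * Real.cos φ)^2/N) *
        ((Real.sqrt (Real.pi*N))⁻¹ * Real.exp (-(b - Real.sqrt P * Real.sin φ)^2/N))
        = ((Real.sqrt (Real.pi*N))⁻¹ * (Real.sqrt (Real.pi*N))⁻¹) *
          Real.exp (-(a - Real.sqrt P * Real.cos φ)^2/N + -(b - Real.sqrt P * Real.sin φ)^2/N) := by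
          rw [Real.exp_add]; ring
      _ = (Real.pi*N)⁻¹ * Real.exp (-((a^2+b^2) + P)/N + (A * Real.cos φ + B * Real.sin φ)) := by
          rw [hsq, hexpo φ]
      _ = ((Real.pi*N)⁻¹ * Real.exp (-((a^2+b^2) + P)/N)) *
          Real.exp (A * Real.cos φ + B * Real.sin φ) := by rw [Real.exp_add]; ring
  rw [intervalIntegral.integral_congr (g := fun φ => ((Real.pi*N)⁻¹ *
      Real.exp (-((a^2+b^2) + P)/N)) * Real.exp (A * Real.cos φ + B * Real.sin φ))
      (fun φ _ => hexp φ),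
    intervalIntegral.integral_const_mul, trig_main]
  have hAB : Real.sqrt (A^2 + B^2) = 2 * Real.sqrt (a^2+b^2) * Real.sqrt P / N := by
    rw [hA, hB]
    rw [show (2 * Real.sqrt P * a / N)^2 + (2 * Real.sqrt P * b / N)^2
      = (2 * Real.sqrt P / N)^2 * (a^2 + b^2) by ring]
    rw [Real.sqrt_mul (by positivity), Real.sqrt_sq (by positivity)]
    ring
  rw [hAB, Real.sq_sqrt (by positivity : (0:ℝ) ≤ a^2+b^2)]
  field_simp

lemma core_lintegral (P N : ℝ) (hP : 0 < P) (hN : 0 < N) (a b : ℝ) :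
    (ENNReal.ofReal (2*Real.pi))⁻¹ * ∫⁻ φ in Set.Ico (0:ℝ) (2*Real.pi),
        ENNReal.ofReal ((Real.sqrt (Real.pi*N))⁻¹ * Real.exp (-(a - Real.sqrt P * Real.cos φ)^2/N) *
          ((Real.sqrt (Real.pi*N))⁻¹ * Real.exp (-(b - Real.sqrt P * Real.sin φ)^2/N)))
      = ENNReal.ofReal ((1/(Real.pi*N)) * Real.exp (-(Real.sqrt (a^2+b^2)^2 + P)/N) *
          besselI0 (2 * Real.sqrt (a^2+b^2) * Real.sqrt P / N)) := by
  have h2π : (0:ℝ) < 2*Real.pi := by positivity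
  set f : ℝ → ℝ := fun φ =>
      (Real.sqrt (Real.pi*N))⁻¹ * Real.exp (-(a - Real.sqrt P * Real.cos φ)^2/N) *
        ((Real.sqrt (Real.pi*N))⁻¹ * Real.exp (-(b - Real.sqrt P * Real.sin φ)^2/N)) with hf
  have hcont : Continuous f := by fun_prop
  have hnn : ∀ φ, 0 ≤ f φ := fun φ => by rw [hf]; positivity
  rw [Measure.restrict_congr_set Ico_ae_eq_Ioc]
  have h1 : ∫⁻ φ in Set.Ioc (0:ℝ) (2*Real.pi), ENNReal.ofReal (f φ)
      = ENNReal.ofReal (∫ φ in Set.Ioc (0:ℝ) (2*Real.pi), f φ) :=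
    (ofReal_integral_eq_lintegral_ofReal (hcont.integrableOn_Ioc) (ae_of_all _ hnn)).symm
  rw [h1, ← intervalIntegral.integral_of_le h2π.le,
    ← ENNReal.ofReal_inv_of_pos h2π, ← ENNReal.ofReal_mul (by positivity)]
  exact congrArg ENNReal.ofReal (core_real P N hP hN a b)

lemma gauss_pdf_eq (N : ℝ) (hN : 0 < N) :
    gaussianReal 0 (Real.toNNReal (N/2)) = volume.withDensity
      (fun x => ENNReal.ofReal ((Real.sqrt (Real.pi*N))⁻¹ * Real.exp (-x^2/N))) := by
  have hv : Real.toNNReal (N/2) ≠ 0 := by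
    simp only [ne_eq, Real.toNNReal_eq_zero, not_le]
    linarith
  rw [gaussianReal_of_var_ne_zero _ hv]
  congr 1
  ext x
  rw [gaussianPDF, gaussianPDFReal]
  have hc : ((Real.toNNReal (N/2)) : ℝ) = N/2 := Real.coe_toNNReal _ (by linarith)
  rw [hc]
  rw [show 2 * Real.pi * (N/2) = Real.pi * N by ring, show 2 * (N/2) = N by ring, sub_zero]

lemma gauss_prod_eq (N : ℝ) (hN : 0 < N) :
    (gaussianReal 0 (Real.toNNReal (N/2))).prod (gaussianReal 0 (Real.toNNReal (N/2)))
      = (volume : Measure (ℝ×ℝ)).withDensity (fun z =>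
          ENNReal.ofReal ((Real.sqrt (Real.pi*N))⁻¹ * Real.exp (-z.1^2/N)) *
          ENNReal.ofReal ((Real.sqrt (Real.pi*N))⁻¹ * Real.exp (-z.2^2/N))) := by
  have hg := gauss_pdf_eq N hN
  have hm : Measurable (fun x : ℝ => ENNReal.ofReal ((Real.sqrt (Real.pi*N))⁻¹ *
      Real.exp (-x^2/N))) := by fun_prop
  refine Measure.prod_eq fun s t hs ht => ?_
  rw [withDensity_apply _ (hs.prod ht), Measure.volume_eq_prod ℝ ℝ, ← Measure.prod_restrict,
    lintegral_prod_mul hm.aemeasurable hm.aemeasurable,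
    hg, withDensity_apply _ hs, withDensity_apply _ ht]

lemma iIndepFun_of_ae_eq {Ω : Type*} [MeasureSpace Ω] {f g : Fin 3 → Ω → ℝ}
    (h : iIndepFun f ℙ)
    (hfg : ∀ i, f i =ᵐ[ℙ] g i) :
    iIndepFun g ℙ := by
  rw [iIndepFun_iff_measure_inter_preimage_eq_mul] at h ⊢
  intro S sets hsets
  have hone : ∀ (i : Fin 3) (s : Set ℝ), ℙ (g i ⁻¹' s) = ℙ (f i ⁻¹' s) := by
    intro i s
    refine measure_congr ?_
    filter_upwards [hfg i] with ω hω
    change (g i ω ∈ s) = (f i ω ∈ s)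
    rw [hω]
  have hall : ℙ (⋂ i ∈ S, g i ⁻¹' sets i) = ℙ (⋂ i ∈ S, f i ⁻¹' sets i) := by
    refine measure_congr ?_
    filter_upwards [hfg 0, hfg 1, hfg 2] with ω h0 h1 h2
    have hw : ∀ i : Fin 3, f i ω = g i ω := by
      intro i; fin_cases i <;> assumption
    change (ω ∈ ⋂ i ∈ S, g i ⁻¹' sets i) = (ω ∈ ⋂ i ∈ S, f i ⁻¹' sets i)
    simp only [Set.mem_iInter, Set.mem_preimage, eq_iff_iff]
    exact ⟨fun H i hi => by rw [hw i]; exact H i hi,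
      fun H i hi => by rw [← hw i]; exact H i hi⟩
  rw [hall, h S hsets]
  exact Finset.prod_congr rfl fun i _ => (hone i _).symm

end Aux

theorem ring_output_density_meas (P N : ℝ) (hP : 0 < P) (hN : 0 < N)
    {Ω : Type*} [MeasureSpace Ω] [IsProbabilityMeasure (ℙ : Measure Ω)]
    (Φ Z₁ Z₂ : Ω → ℝ)
    (hΦm : Measurable Φ) (hZ₁m : Measurable Z₁) (hZ₂m : Measurable Z₂)
    (hΦ : Measure.map Φ ℙ =
      (ENNReal.ofReal (2 * Real.pi))⁻¹ • volume.restrict (Set.Ico 0 (2 * Real.pi)))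
    (hZ₁ : Measure.map Z₁ ℙ = gaussianReal 0 (Real.toNNReal (N / 2)))
    (hZ₂ : Measure.map Z₂ ℙ = gaussianReal 0 (Real.toNNReal (N / 2)))
    (hindep : iIndepFun ![Φ, Z₁, Z₂] ℙ) :
    Measure.map (fun ω => ((Real.sqrt P * Real.cos (Φ ω) + Z₁ ω : ℝ) +
      (Real.sqrt P * Real.sin (Φ ω) + Z₂ ω : ℝ) * Complex.I : ℂ)) ℙ
      = volume.withDensity (fun y : ℂ =>
      ENNReal.ofReal ((1 / (Real.pi * N)) * Real.exp (-(‖y‖ ^ 2 + P) / N) *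
        besselI0 (2 * ‖y‖ * Real.sqrt P / N))) := by
  classical
  have hmeas : ∀ i, Measurable (![Φ, Z₁, Z₂] i) := by
    intro i; fin_cases i <;> assumption
  set γ := gaussianReal 0 (Real.toNNReal (N/2)) with hγ
  set g : ℝ → ℝ≥0∞ := fun x => ENNReal.ofReal ((Real.sqrt (Real.pi*N))⁻¹ *
      Real.exp (-x^2/N)) with hgdef
  set G : ℝ×ℝ → ℝ≥0∞ := fun z => g z.1 * g z.2 with hGdef
  have hGm : Measurable G := by
    rw [hGdef, hgdef]; fun_prop
  -- joint law
  have h12 : IndepFun Z₁ Z₂ ℙ := hindep.indepFun (show (1:Fin 3) ≠ 2 by decide)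
  have hpairlaw : Measure.map (fun ω => (Z₁ ω, Z₂ ω)) ℙ = γ.prod γ := by
    rw [(indepFun_iff_map_prod_eq_prod_map_map hZ₁m.aemeasurable
      hZ₂m.aemeasurable).mp h12, hZ₁, hZ₂]
  have h0p : IndepFun Φ (fun ω => (Z₁ ω, Z₂ ω)) ℙ :=
    (hindep.indepFun_prodMk hmeas 1 2 0 (by decide) (by decide)).symm
  have hT : Measurable (fun ω => (Φ ω, (Z₁ ω, Z₂ ω))) :=
    hΦm.prodMk (hZ₁m.prodMk hZ₂m)
  have hjoint : Measure.map (fun ω => (Φ ω, (Z₁ ω, Z₂ ω))) ℙ =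
      ((ENNReal.ofReal (2 * Real.pi))⁻¹ •
        volume.restrict (Set.Ico 0 (2 * Real.pi))).prod (γ.prod γ) := by
    rw [(indepFun_iff_map_prod_eq_prod_map_map hΦm.aemeasurable
      ((hZ₁m.prodMk hZ₂m).aemeasurable)).mp h0p, hΦ, hpairlaw]
  set k : ℝ × (ℝ × ℝ) → ℂ := fun q =>
    ((Real.sqrt P * Real.cos q.1 + q.2.1 : ℝ) +
      (Real.sqrt P * Real.sin q.1 + q.2.2 : ℝ) * Complex.I : ℂ) with hkdef
  have hk : Measurable k := by rw [hkdef]; fun_prop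
  have hYeq : (fun ω => ((Real.sqrt P * Real.cos (Φ ω) + Z₁ ω : ℝ) +
      (Real.sqrt P * Real.sin (Φ ω) + Z₂ ω : ℝ) * Complex.I : ℂ))
      = k ∘ (fun ω => (Φ ω, (Z₁ ω, Z₂ ω))) := rfl
  rw [hYeq, ← Measure.map_map hk hT, hjoint]
  -- now a measure identity on ℂ
  ext s hs
  have hγγ := gauss_prod_eq N hN
  set T := Complex.measurableEquivRealProd with hTdef
  set B : Set (ℝ×ℝ) := T.symm ⁻¹' s with hBdef
  have hB : MeasurableSet B := T.symm.measurable hs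
  have hvol : (volume : Measure ℂ) = Measure.map T.symm volume :=
    (Complex.volume_preserving_equiv_real_prod.symm T).map_eq.symm
  -- LHS
  rw [Measure.map_apply hk hs, Measure.prod_apply (hk hs)]
  have step1 : ∀ φ : ℝ, (γ.prod γ) (Prod.mk φ ⁻¹' (k ⁻¹' s))
      = ∫⁻ w in B, G (w - (Real.sqrt P * Real.cos φ, Real.sqrt P * Real.sin φ)) := by
    intro φ
    set v : ℝ×ℝ := (Real.sqrt P * Real.cos φ, Real.sqrt P * Real.sin φ) with hv
    have hset : Prod.mk φ ⁻¹' (k ⁻¹' s) = (fun z : ℝ×ℝ => z + v) ⁻¹' B := by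
      ext z
      simp only [Set.mem_preimage, hBdef, hkdef, hTdef, hv]
      have : ((Real.sqrt P * Real.cos φ + z.1 : ℝ) +
          (Real.sqrt P * Real.sin φ + z.2 : ℝ) * Complex.I : ℂ)
          = Complex.measurableEquivRealProd.symm
            (z.1 + Real.sqrt P * Real.cos φ, z.2 + Real.sqrt P * Real.sin φ) := by
        rw [Complex.measurableEquivRealProd_symm_apply, Complex.mk_eq_add_mul_I,
          add_comm (Real.sqrt P * Real.cos φ) z.1, add_comm (Real.sqrt P * Real.sin φ) z.2]
      rw [this]
      rfl
    set e : ℝ×ℝ ≃ᵐ ℝ×ℝ := (Homeomorph.addRight v).toMeasurableEquiv with hedef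
    have hecoe : (e : ℝ×ℝ → ℝ×ℝ) = fun z => z + v := rfl
    have hmapinv : Measure.map e volume = volume := by
      rw [hecoe]; exact map_add_right_eq_self volume v
    rw [hγγ, withDensity_apply _ (measurable_prodMk_left (hk hs)), hset]
    calc ∫⁻ z in (fun z : ℝ×ℝ => z + v) ⁻¹' B, G z
        = ∫⁻ z, G z ∂(volume.restrict (e ⁻¹' B)) := by rw [hecoe]
      _ = ∫⁻ w, G (w - v) ∂((Measure.map e volume).restrict B) := by
          rw [Measure.restrict_map e.measurable hB,
            MeasureTheory.lintegral_map_equiv (fun w => G (w - v)) e]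
          congr 1
          ext z
          rw [hecoe]
          simp
      _ = ∫⁻ w in B, G (w - v) := by rw [hmapinv]
  rw [lintegral_congr step1, lintegral_smul_measure]
  have hswap : ∫⁻ φ in Set.Ico (0:ℝ) (2*Real.pi), ∫⁻ w in B,
        G (w - (Real.sqrt P * Real.cos φ, Real.sqrt P * Real.sin φ))
      = ∫⁻ w in B, ∫⁻ φ in Set.Ico (0:ℝ) (2*Real.pi),
        G (w - (Real.sqrt P * Real.cos φ, Real.sqrt P * Real.sin φ)) := by
    apply lintegral_lintegral_swap
    apply Measurable.aemeasurable
    apply hGm.comp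
    fun_prop
  rw [hswap, smul_eq_mul, ← lintegral_const_mul' _ _ (by simp [Real.pi_pos] : (ENNReal.ofReal (2*Real.pi))⁻¹ ≠ ⊤)]
  -- RHS
  rw [withDensity_apply _ hs, hvol, Measure.restrict_map T.symm.measurable hs,
    MeasureTheory.lintegral_map_equiv]
  refine lintegral_congr fun w => ?_
  have habs : ‖T.symm w‖ = Real.sqrt (w.1^2 + w.2^2) := by
    rw [hTdef, Complex.measurableEquivRealProd_symm_apply, Complex.norm_def,
      Complex.normSq_mk]
    ring_nf
  rw [habs]
  have hGform : ∀ φ : ℝ, G (w - (Real.sqrt P * Real.cos φ, Real.sqrt P * Real.sin φ))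
      = ENNReal.ofReal ((Real.sqrt (Real.pi*N))⁻¹ *
          Real.exp (-(w.1 - Real.sqrt P * Real.cos φ)^2/N) *
        ((Real.sqrt (Real.pi*N))⁻¹ * Real.exp (-(w.2 - Real.sqrt P * Real.sin φ)^2/N))) := by
    intro φ
    rw [hGdef, hgdef]
    simp only [Prod.fst_sub, Prod.snd_sub]
    rw [← ENNReal.ofReal_mul (by positivity)]
  rw [lintegral_congr fun φ => hGform φ]
  exact core_lintegral P N hP hN w.1 w.2

/-- The output `Y = √P e^{iΦ} + Z` of a complex AWGN channel, with `Φ` uniform on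
`[0,2π)` and `Z = Z₁ + iZ₂` circularly-symmetric Gaussian of variance `N`, all independent,
has density `p(y) = (1/(πN)) e^{−(|y|²+P)/N} I₀(2|y|√P/N)` w.r.t. Lebesgue measure on `ℂ`. -/
theorem ring_output_density (P N : ℝ) (hP : 0 < P) (hN : 0 < N)
    {Ω : Type*} [MeasureSpace Ω] [IsProbabilityMeasure (ℙ : Measure Ω)]
    (Φ Z₁ Z₂ : Ω → ℝ)
    (hΦ : Measure.map Φ ℙ =
      (ENNReal.ofReal (2 * Real.pi))⁻¹ • volume.restrict (Set.Ico 0 (2 * Real.pi)))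
    (hZ₁ : Measure.map Z₁ ℙ = gaussianReal 0 (Real.toNNReal (N / 2)))
    (hZ₂ : Measure.map Z₂ ℙ = gaussianReal 0 (Real.toNNReal (N / 2)))
    (hindep : iIndepFun ![Φ, Z₁, Z₂] ℙ)
    (Y : Ω → ℂ)
    (hY : ∀ ω : Ω, Y ω = (Real.sqrt P * Real.cos (Φ ω) + Z₁ ω : ℝ) +
      (Real.sqrt P * Real.sin (Φ ω) + Z₂ ω : ℝ) * Complex.I) :
    Measure.map Y ℙ = volume.withDensity (fun y : ℂ =>
      ENNReal.ofReal ((1 / (Real.pi * N)) * Real.exp (-(‖y‖ ^ 2 + P) / N) *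
        besselI0 (2 * ‖y‖ * Real.sqrt P / N))) := by
  classical
  -- a.e. measurability of the three random variables
  have hΦae : AEMeasurable Φ ℙ := by
    by_contra h
    rw [Measure.map_of_not_aemeasurable h] at hΦ
    have h0 : ((ENNReal.ofReal (2*Real.pi))⁻¹ •
        volume.restrict (Set.Ico (0:ℝ) (2*Real.pi))) Set.univ = 1 := by
      rw [Measure.smul_apply, Measure.restrict_apply_univ, Real.volume_Ico, sub_zero,
        smul_eq_mul, ENNReal.inv_mul_cancel
          (ENNReal.ofReal_pos.mpr Real.two_pi_pos).ne' ENNReal.ofReal_ne_top]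
    rw [← hΦ] at h0
    simp at h0
  have hZ₁ae : AEMeasurable Z₁ ℙ := by
    by_contra h
    rw [Measure.map_of_not_aemeasurable h] at hZ₁
    have := congrArg (fun m : Measure ℝ => m Set.univ) hZ₁
    simp [measure_univ] at this
  have hZ₂ae : AEMeasurable Z₂ ℙ := by
    by_contra h
    rw [Measure.map_of_not_aemeasurable h] at hZ₂
    have := congrArg (fun m : Measure ℝ => m Set.univ) hZ₂
    simp [measure_univ] at this
  set Φ' := hΦae.mk Φ with hΦ'def
  set Z₁' := hZ₁ae.mk Z₁ with hZ₁'def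
  set Z₂' := hZ₂ae.mk Z₂ with hZ₂'def
  have hΦe : Φ =ᵐ[ℙ] Φ' := hΦae.ae_eq_mk
  have h1e : Z₁ =ᵐ[ℙ] Z₁' := hZ₁ae.ae_eq_mk
  have h2e : Z₂ =ᵐ[ℙ] Z₂' := hZ₂ae.ae_eq_mk
  have hΦ' : Measure.map Φ' ℙ =
      (ENNReal.ofReal (2 * Real.pi))⁻¹ • volume.restrict (Set.Ico 0 (2 * Real.pi)) := by
    rw [← Measure.map_congr hΦe]; exact hΦ
  have hZ₁' : Measure.map Z₁' ℙ = gaussianReal 0 (Real.toNNReal (N / 2)) := by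
    rw [← Measure.map_congr h1e]; exact hZ₁
  have hZ₂' : Measure.map Z₂' ℙ = gaussianReal 0 (Real.toNNReal (N / 2)) := by
    rw [← Measure.map_congr h2e]; exact hZ₂
  have hindep' : iIndepFun ![Φ', Z₁', Z₂'] ℙ := by
    refine iIndepFun_of_ae_eq hindep ?_
    intro i
    fin_cases i
    · simpa using hΦe
    · simpa using h1e
    · simpa using h2e
  have hYe : Y =ᵐ[ℙ] (fun ω => ((Real.sqrt P * Real.cos (Φ' ω) + Z₁' ω : ℝ) +
      (Real.sqrt P * Real.sin (Φ' ω) + Z₂' ω : ℝ) * Complex.I : ℂ)) := by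
    filter_upwards [hΦe, h1e, h2e] with ω e0 e1 e2
    rw [hY ω, e0, e1, e2]
  rw [Measure.map_congr hYe]
  exact ring_output_density_meas P N hP hN Φ' Z₁' Z₂'
    hΦae.measurable_mk hZ₁ae.measurable_mk hZ₂ae.measurable_mk
    hΦ' hZ₁' hZ₂' hindep'
end

section
/- Fix a real p₀ > 0 and define J : ℝ → ℝ for large s by J(s) = (−3 + √(1 + 48 s/(p₀ · ln s)))/4. Then liminf_{s → ∞} [ (1/(2·⌊J(s)⌋)) · ∑_{j=1}^{⌊J(s)⌋} ln((ln s) · j² · p₀) ] / ln s ≥ 1/2. -/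
open Filter Topology

lemma sum_log_ge (n : ℕ) : (n:ℝ) * Real.log n - n ≤ ∑ j ∈ Finset.Icc 1 n, Real.log j := by
  induction n with
  | zero => simp
  | succ n ih =>
    rw [Finset.sum_Icc_succ_top (by omega : 1 ≤ n+1)]
    have key : ((n+1:ℕ):ℝ) * Real.log ((n+1:ℕ)) - ((n+1:ℕ)) ≤
        ((n:ℝ) * Real.log n - n) + Real.log ((n+1:ℕ)) := by
      rcases Nat.eq_zero_or_pos n with h | h
      · subst h; simp
      · have hn : (0:ℝ) < n := by exact_mod_cast h
        have hd : Real.log ((n+1:ℕ)) - Real.log n ≤ 1 / n := by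
          rw [← Real.log_div (by positivity) (ne_of_gt hn)]
          have h2 := Real.log_le_sub_one_of_pos (show (0:ℝ) < ((n+1:ℕ):ℝ)/n by positivity)
          have : ((n+1:ℕ):ℝ)/n - 1 = 1/n := by push_cast; field_simp; ring
          linarith
        have : (n:ℝ) * (Real.log ((n+1:ℕ)) - Real.log n) ≤ 1 := by
          have := mul_le_mul_of_nonneg_left hd (le_of_lt hn)
          rw [mul_one_div, div_self (ne_of_gt hn)] at this
          exact this
        push_cast at this ⊢
        nlinarith
    linarith

/-- The phase contribution `(1/(2J)) ∑_{j=1}^J ln(P_j/N)` with ring powers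
`P_j/N = (ln s)·j²·p₀`, normalized by `ln s`, has limit inferior at least `1/2`. -/
theorem phase_contribution_prelog_ge_half (p₀ : ℝ) (hp₀ : 0 < p₀)
    (J : ℝ → ℝ)
    (hJ : ∀ᶠ s in atTop, J s = (-3 + Real.sqrt (1 + 48 * s / (p₀ * Real.log s))) / 4) :
    (1 : ℝ) / 2 ≤ liminf (fun s =>
      ((1 / (2 * (⌊J s⌋₊ : ℝ))) *
        ∑ j ∈ Finset.Icc 1 ⌊J s⌋₊, Real.log (Real.log s * (j : ℝ) ^ 2 * p₀)) /
      Real.log s) atTop := by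
  set f : ℝ → ℝ := fun s =>
      ((1 / (2 * (⌊J s⌋₊ : ℝ))) *
        ∑ j ∈ Finset.Icc 1 ⌊J s⌋₊, Real.log (Real.log s * (j : ℝ) ^ 2 * p₀)) /
      Real.log s with hf
  set c : ℝ := Real.log 48 / 2 - Real.log 8 - 1 with hc
  set g : ℝ → ℝ := fun s => 1/2 + c / Real.log s with hgdef
  -- g tends to 1/2
  have hg : Tendsto g atTop (𝓝 (1/2)) := by
    have h1 : Tendsto (fun s : ℝ => (Real.log s)⁻¹) atTop (𝓝 0) :=
      Real.tendsto_log_atTop.inv_tendsto_atTop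
    have h2 : Tendsto (fun s : ℝ => c * (Real.log s)⁻¹) atTop (𝓝 (c * 0)) := h1.const_mul c
    have h3 := tendsto_const_nhds (α := ℝ) (x := (1:ℝ)/2) (f := atTop) |>.add h2
    simpa [hgdef, div_eq_mul_inv] using h3
  -- u tends to atTop
  have hdiv : Tendsto (fun s : ℝ => s / Real.log s) atTop atTop := by
    have h1 : Tendsto (fun s : ℝ => Real.log s / s) atTop (𝓝 0) := by
      have := Real.isLittleO_log_id_atTop.tendsto_div_nhds_zero
      simpa using this
    have h2 : ∀ᶠ s : ℝ in atTop, Real.log s / s ∈ Set.Ioi (0:ℝ) := by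
      filter_upwards [eventually_gt_atTop (1:ℝ)] with s hs
      exact div_pos (Real.log_pos hs) (by linarith)
    have h3 : Tendsto (fun s : ℝ => Real.log s / s) atTop (𝓝[>] 0) :=
      tendsto_nhdsWithin_of_tendsto_nhds_of_eventually_within _ h1 h2
    have h4 := h3.inv_tendsto_nhdsGT_zero
    have : (fun s : ℝ => (Real.log s / s)⁻¹) = fun s : ℝ => s / Real.log s := by
      funext s; rw [inv_div]
    rwa [← this]
    
  have hu : Tendsto (fun s : ℝ => 48 * s / (p₀ * Real.log s)) atTop atTop := by
    have h1 := hdiv.const_mul_atTop (show (0:ℝ) < 48 / p₀ by positivity)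
    have : (fun s : ℝ => 48 / p₀ * (s / Real.log s)) = fun s : ℝ => 48 * s / (p₀ * Real.log s) := by
      funext s; rw [div_mul_div_comm]
    rwa [← this]
  -- main eventual bounds
  have hmain : ∀ᶠ s in atTop,
      (1/2 + c / Real.log s ≤
        ((1 / (2 * (⌊J s⌋₊ : ℝ))) *
          ∑ j ∈ Finset.Icc 1 ⌊J s⌋₊, Real.log (Real.log s * (j : ℝ) ^ 2 * p₀)) / Real.log s) ∧
      (((1 / (2 * (⌊J s⌋₊ : ℝ))) *
          ∑ j ∈ Finset.Icc 1 ⌊J s⌋₊, Real.log (Real.log s * (j : ℝ) ^ 2 * p₀)) / Real.log s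
        ≤ 1/2 + Real.log 48 / 2) := by
    filter_upwards [hJ, Real.tendsto_log_atTop.eventually_ge_atTop 1,
        hu.eventually_ge_atTop 196, eventually_gt_atTop (1:ℝ)] with s hJs hL1 hu196 hs1
    clear_value f g c
    set L := Real.log s with hL
    set n := ⌊J s⌋₊ with hn
    set u := 48 * s / (p₀ * L) with hudef
    set v := Real.sqrt u with hv
    have hL0 : (0:ℝ) < L := by linarith
    have hs0 : (0:ℝ) < s := by linarith
    have hu0 : (0:ℝ) < u := by rw [hudef]; positivity
    have hv14 : 14 ≤ v := by
      rw [hv, show (14:ℝ) = Real.sqrt 196 by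
        rw [show (196:ℝ) = 14^2 by norm_num, Real.sqrt_sq (by norm_num)]]
      exact Real.sqrt_le_sqrt hu196
    clear_value L n u v
    have hv0 : (0:ℝ) < v := by linarith
    have hsq1 : Real.sqrt (1 + u) ^ 2 = 1 + u := Real.sq_sqrt (by linarith)
    have hsqv : v ^ 2 = u := by rw [hv]; exact Real.sq_sqrt hu0.le
    have hsqnn : 0 ≤ Real.sqrt (1 + u) := Real.sqrt_nonneg _
    have hvle : v ≤ Real.sqrt (1 + u) := by rw [hv]; exact Real.sqrt_le_sqrt (by linarith)
    have hle1v : Real.sqrt (1 + u) ≤ 1 + v := by nlinarith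
    have hJlow : (v - 3)/4 ≤ J s := by rw [hJs]; linarith
    have hJhigh : J s ≤ (v - 2)/4 := by rw [hJs]; linarith
    have hJ0 : 0 ≤ J s := by linarith
    have hfl : J s - 1 < (n:ℝ) := by rw [hn]; exact_mod_cast Nat.sub_one_lt_floor (J s)
    have hnv : v/8 ≤ (n:ℝ) := by linarith
    have hn1 : 1 ≤ n := by
      have : (1:ℝ) ≤ (n:ℝ) := by linarith
      exact_mod_cast this
    have hn0 : (0:ℝ) < (n:ℝ) := by exact_mod_cast hn1
    have hnJ : (n:ℝ) ≤ J s := by rw [hn]; exact_mod_cast Nat.floor_le hJ0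
    have hnu : (n:ℝ) ≤ v := by linarith
    -- log computations
    have hlogu : Real.log u = Real.log 48 + L - (Real.log p₀ + Real.log L) := by
      rw [hudef, Real.log_div (by positivity) (by positivity),
        Real.log_mul (by norm_num) (ne_of_gt hs0), Real.log_mul (ne_of_gt hp₀) (ne_of_gt hL0),
        ← hL]
    have hlogv : Real.log v = Real.log u / 2 := by rw [hv]; exact Real.log_sqrt hu0.le
    have hlogv8 : Real.log (v/8) = Real.log u / 2 - Real.log 8 := by
      rw [Real.log_div (ne_of_gt hv0) (by norm_num), hlogv]
    have hlogn1 : Real.log (v/8) ≤ Real.log n := Real.log_le_log (by positivity) hnv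
    have hlogn2 : Real.log n ≤ Real.log v := Real.log_le_log hn0 hnu
    -- sum rewrite
    have hterm : ∀ j ∈ Finset.Icc 1 n,
        Real.log (L * (j:ℝ)^2 * p₀) = (Real.log L + Real.log p₀) + 2 * Real.log j := by
      intro j hj
      have hj1 : 1 ≤ j := (Finset.mem_Icc.mp hj).1
      have hj0 : (0:ℝ) < (j:ℝ) := by exact_mod_cast hj1
      rw [Real.log_mul (by positivity) (ne_of_gt hp₀),
        Real.log_mul (ne_of_gt hL0) (by positivity), Real.log_pow]
      push_cast; ring
    have hsum_eq : ∑ j ∈ Finset.Icc 1 n, Real.log (L * (j:ℝ)^2 * p₀)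
        = (n:ℝ) * (Real.log L + Real.log p₀) + 2 * ∑ j ∈ Finset.Icc 1 n, Real.log j := by
      rw [Finset.sum_congr rfl hterm, Finset.sum_add_distrib, Finset.sum_const, Nat.card_Icc,
        ← Finset.mul_sum]
      simp [nsmul_eq_mul]; ring
    have hsum_ub : ∑ j ∈ Finset.Icc 1 n, Real.log j ≤ (n:ℝ) * Real.log v := by
      have h1 : ∑ j ∈ Finset.Icc 1 n, Real.log j
          ≤ ∑ _j ∈ Finset.Icc 1 n, Real.log v := by
        apply Finset.sum_le_sum
        intro j hj
        have hj1 : 1 ≤ j := (Finset.mem_Icc.mp hj).1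
        have hj0 : (0:ℝ) < (j:ℝ) := by exact_mod_cast hj1
        apply Real.log_le_log hj0
        calc (j:ℝ) ≤ (n:ℝ) := by exact_mod_cast (Finset.mem_Icc.mp hj).2
          _ ≤ v := hnu
      rw [Finset.sum_const, Nat.card_Icc] at h1
      calc ∑ j ∈ Finset.Icc 1 n, Real.log j ≤ (n + 1 - 1) • Real.log v := h1
        _ = (n:ℝ) * Real.log v := by simp [nsmul_eq_mul]
    have hsum_lb := sum_log_ge n
    -- abstract the sum of logs
    obtain ⟨T, hT⟩ : ∃ T, ∑ j ∈ Finset.Icc 1 n, Real.log j = T := ⟨_, rfl⟩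
    rw [hT] at hsum_eq hsum_ub hsum_lb
    -- the key sum bounds
    have hS : (n:ℝ) * (L + 2*c) ≤ ∑ j ∈ Finset.Icc 1 n, Real.log (L * (j:ℝ)^2 * p₀) := by
      have h2 : (n:ℝ) * Real.log (v/8) ≤ (n:ℝ) * Real.log n :=
        mul_le_mul_of_nonneg_left hlogn1 hn0.le
      have hring : (n:ℝ) * (L + 2*c)
          = (n:ℝ) * (Real.log L + Real.log p₀) + 2 * ((n:ℝ) * Real.log (v/8) - (n:ℝ)) := by
        rw [hlogv8, hlogu, hc]; ring
      rw [hsum_eq]; linarith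
    have hS2 : ∑ j ∈ Finset.Icc 1 n, Real.log (L * (j:ℝ)^2 * p₀)
        ≤ (n:ℝ) * (L + Real.log 48) := by
      have h2 : (n:ℝ) * Real.log v ≤ (n:ℝ) * (Real.log u / 2) := le_of_eq (by rw [hlogv])
      have hring : (n:ℝ) * (Real.log L + Real.log p₀) + 2 * ((n:ℝ) * (Real.log u / 2))
          = (n:ℝ) * (L + Real.log 48) := by rw [hlogu]; ring
      rw [hsum_eq]
      linarith [hsum_ub, h2, hring]
    obtain ⟨S, hSe⟩ : ∃ S, ∑ j ∈ Finset.Icc 1 n, Real.log (L * (j:ℝ)^2 * p₀) = S := ⟨_, rfl⟩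
    rw [hSe] at hS hS2 ⊢
    constructor
    · -- lower bound
      have key : L/2 + c ≤ 1/(2*(n:ℝ)) * S := by
        have h := mul_le_mul_of_nonneg_left hS (show (0:ℝ) ≤ 1/(2*(n:ℝ)) by positivity)
        have heq : 1/(2*(n:ℝ)) * ((n:ℝ)*(L + 2*c)) = L/2 + c := by
          field_simp
        linarith [heq ▸ h]
      have heq2 : 1/2 + c/L = (L/2 + c)/L := by field_simp
      rw [heq2]
      exact div_le_div_of_nonneg_right key hL0.le
    · -- upper bound
      have key : 1/(2*(n:ℝ)) * S ≤ (L + Real.log 48)/2 := by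
        have h := mul_le_mul_of_nonneg_left hS2 (show (0:ℝ) ≤ 1/(2*(n:ℝ)) by positivity)
        have heq : 1/(2*(n:ℝ)) * ((n:ℝ)*(L + Real.log 48)) = (L + Real.log 48)/2 := by
          field_simp
        linarith [heq ▸ h]
      have h48 : (0:ℝ) ≤ Real.log 48 := Real.log_nonneg (by norm_num)
      calc (1/(2*(n:ℝ)) * S)/L ≤ ((L + Real.log 48)/2)/L := div_le_div_of_nonneg_right key hL0.le
        _ = 1/2 + Real.log 48/(2*L) := by field_simp
        _ ≤ 1/2 + Real.log 48/2 := by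
            have : Real.log 48/(2*L) ≤ Real.log 48/2 := by
              apply div_le_div_of_nonneg_left h48 two_pos; linarith
            linarith
  -- conclude via liminf
  have hle : ∀ᶠ s in atTop, g s ≤ f s := hmain.mono fun s h => h.1
  have hub : ∀ᶠ s in atTop, f s ≤ 1/2 + Real.log 48 / 2 := hmain.mono fun s h => h.2
  have hbdd : IsBoundedUnder (· ≥ ·) atTop g := hg.isBoundedUnder_ge
  have hcob : IsCoboundedUnder (· ≥ ·) atTop f :=
    isCoboundedUnder_ge_of_eventually_le atTop hub
  calc (1:ℝ)/2 = liminf g atTop := (hg.liminf_eq).symm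
    _ ≤ liminf f atTop := liminf_le_liminf hle hbdd hcob
end
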